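/- Let X and Y be Polish spaces and φ : X × Y → [-∞,∞] Baire measurable. Then the set of x ∈ X such that the function y ↦ φ(x,y) is Baire measurable is comeagre in X. -/

import Mathlib

/-- A function into `[-∞,∞]` is Baire measurable if the preimage of every Borel
set is Baire measurable (has the Baire property). -/
def BaireMeasurableFun {X : Type*} [TopologicalSpace X] (φ : X → EReal) : Prop :=
  ∀ s : Set EReal, MeasurableSet s → BaireMeasurableSet (φ ⁻¹' s)

open Set Filter Topology TopologicalSpace

section KU

variable {X Y : Type*} [TopologicalSpace X] [TopologicalSpace Y] [SecondCountableTopology Y]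

/-- Half of Kuratowski–Ulam: if `U` is dense open in `X × Y`, then for comeagrely many
`x` the section `U_x` is dense. -/
lemma dense_section_residual {U : Set (X × Y)} (hU : IsOpen U) (hd : Dense U) :
    {x : X | Dense {y : Y | (x, y) ∈ U}} ∈ residual X := by
  obtain ⟨B, hBc, hBne, hB⟩ := exists_countable_basis Y
  have key : ∀ V ∈ B, {x : X | ∃ y ∈ V, (x, y) ∈ U} ∈ residual X := by
    intro V hV
    have hVo : IsOpen V := hB.isOpen hV
    have hVne : V.Nonempty := Set.nonempty_iff_ne_empty.2 fun h => hBne (h ▸ hV)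
    have heq : {x : X | ∃ y ∈ V, (x, y) ∈ U} = Prod.fst '' (U ∩ univ ×ˢ V) := by
      ext x
      simp only [mem_setOf_eq, mem_image, mem_inter_iff, mem_prod, mem_univ, true_and,
        Prod.exists]
      exact ⟨fun ⟨y, hy, hyu⟩ => ⟨x, y, ⟨hyu, hy⟩, rfl⟩,
        fun ⟨a, b, ⟨hu, hb⟩, h⟩ => by cases h; exact ⟨b, hb, hu⟩⟩
    apply residual_of_dense_open
    · rw [heq]
      exact isOpenMap_fst _ (hU.inter (isOpen_univ.prod hVo))
    · rw [dense_iff_inter_open]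
      intro W hWo hWne
      obtain ⟨p, hpU, hpW, hpV⟩ :
          ∃ p : X × Y, p ∈ U ∧ p.1 ∈ W ∧ p.2 ∈ V := by
        obtain ⟨p, hp1, hp2⟩ := hd.inter_open_nonempty (W ×ˢ V) (hWo.prod hVo)
          ((hWne.prod hVne))
        exact ⟨p, hp2, hp1.1, hp1.2⟩
      exact ⟨p.1, hpW, ⟨p.2, hpV, hpU⟩⟩
  have hmem : (⋂ V ∈ B, {x : X | ∃ y ∈ V, (x, y) ∈ U}) ∈ residual X :=
    (countable_bInter_mem hBc).2 key
  refine mem_of_superset hmem fun x hx => ?_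
  rw [mem_iInter₂] at hx
  rw [mem_setOf_eq, hB.dense_iff]
  intro V hV _
  obtain ⟨y, hyV, hyU⟩ := hx V hV
  exact ⟨y, hyV, hyU⟩

/-- Kuratowski–Ulam: if `M` is meagre in `X × Y`, then for comeagrely many `x`
the section `M_x` is meagre. -/
lemma meagre_section_residual {M : Set (X × Y)} (hM : IsMeagre M) :
    {x : X | IsMeagre {y : Y | (x, y) ∈ M}} ∈ residual X := by
  rw [IsMeagre, mem_residual_iff] at hM
  obtain ⟨S, hSo, hSd, hSc, hSsub⟩ := hM
  have hmem : (⋂ U ∈ S, {x : X | Dense {y : Y | (x, y) ∈ U}}) ∈ residual X :=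
    (countable_bInter_mem hSc).2 fun U hU => dense_section_residual (hSo U hU) (hSd U hU)
  refine mem_of_superset hmem fun x hx => ?_
  rw [mem_iInter₂] at hx
  rw [mem_setOf_eq, isMeagre_iff_countable_union_isNowhereDense]
  refine ⟨(fun U : Set (X × Y) => {y : Y | (x, y) ∈ U}ᶜ) '' S, ?_, hSc.image _, ?_⟩
  · rintro t ⟨U, hU, rfl⟩
    have hUo : IsOpen {y : Y | (x, y) ∈ U} :=
      (hSo U hU).preimage (Continuous.prodMk_right x)
    have hUd : Dense {y : Y | (x, y) ∈ U} := hx U hU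
    exact (isClosed_isNowhereDense_iff_compl.2 (by simpa using ⟨hUo, hUd⟩)).2
  · intro y hy
    have : (x, y) ∉ ⋂₀ S := fun h => hSsub h hy
    rw [mem_sInter] at this
    push_neg at this
    obtain ⟨U, hU, hyU⟩ := this
    exact ⟨{y : Y | (x, y) ∈ U}ᶜ, ⟨U, hU, rfl⟩, hyU⟩

/-- For a Baire measurable set `A` in a product, comeagrely many sections are
Baire measurable. -/
lemma baireMeasurableSet_section {A : Set (X × Y)} (hA : BaireMeasurableSet A) :
    {x : X | BaireMeasurableSet {y : Y | (x, y) ∈ A}} ∈ residual X := by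
  obtain ⟨U, hUo, hAU⟩ := hA.residualEq_isOpen
  have hD : IsMeagre {p : X × Y | ¬ (p ∈ A ↔ p ∈ U)} := by
    rw [IsMeagre]
    have : {p : X × Y | p ∈ A ↔ p ∈ U} ∈ residual (X × Y) := by
      filter_upwards [hAU] with p hp
      exact iff_of_eq hp
    refine mem_of_superset this fun p hp hp' => hp' hp
  refine mem_of_superset (meagre_section_residual hD) fun x hx => ?_
  have hsec : {y : Y | (x, y) ∈ U} =ᵇ {y : Y | (x, y) ∈ A} := by
    have : {y : Y | ¬ ((x, y) ∈ A ↔ (x, y) ∈ U)}ᶜ ∈ residual Y := hx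
    filter_upwards [this] with y hy
    rw [mem_compl_iff, mem_setOf_eq, not_not] at hy
    exact eq_iff_iff.2 hy.symm
  exact ((hUo.preimage (Continuous.prodMk_right x)).baireMeasurableSet).congr hsec

end KU

section ERealGen

variable {Z : Type*} [TopologicalSpace Z]

/-- A function to `EReal` is Baire measurable as soon as preimages of rational
rays `(q, ∞]` are Baire measurable. -/
lemma baireMeasurableFun_of_rat (f : Z → EReal)
    (h : ∀ q : ℚ, BaireMeasurableSet (f ⁻¹' Ioi ((q : ℝ) : EReal))) :
    BaireMeasurableFun f := by
  intro s hs
  letI m : MeasurableSpace Z := eventuallyMeasurableSpace (borel Z) (residual Z)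
  have hm : @Measurable Z EReal m _ f := by
    apply measurable_of_Iio
    intro a
    have hIio : Iio a = ⋃ q : {q : ℚ // (((q : ℚ) : ℝ) : EReal) < a}, (Ioi ((((q : ℚ) : ℝ)) : EReal))ᶜ := by
      ext x
      simp only [mem_Iio, mem_iUnion, mem_compl_iff, mem_Ioi, not_lt, Subtype.exists]
      constructor
      · intro hx
        obtain ⟨q, hq1, hq2⟩ := EReal.exists_rat_btwn_of_lt hx
        exact ⟨q, hq2, le_of_lt hq1⟩
      · rintro ⟨q, hq, hxq⟩
        exact lt_of_le_of_lt hxq hq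
    rw [hIio, preimage_iUnion]
    exact MeasurableSet.iUnion fun q => (h q).compl
  exact hm hs

end ERealGen

/-- For Baire measurable `φ : X × Y → [-∞,∞]` on Polish spaces, the set of `x`
such that `y ↦ φ (x, y)` is Baire measurable is comeagre in `X`. -/
theorem comeagre_sections_baireMeasurable {X Y : Type*}
    [TopologicalSpace X] [PolishSpace X] [TopologicalSpace Y] [PolishSpace Y]
    (φ : X × Y → EReal) (hφ : BaireMeasurableFun φ) :
    {x : X | BaireMeasurableFun (fun y : Y => φ (x, y))} ∈ residual X := by
  have hmem : (⋂ q : ℚ, {x : X | BaireMeasurableSet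
      {y : Y | (x, y) ∈ φ ⁻¹' Ioi (((q : ℚ) : ℝ) : EReal)}}) ∈ residual X := by
    refine countable_iInter_mem.2 fun q => ?_
    exact baireMeasurableSet_section (hφ _ measurableSet_Ioi)
  refine mem_of_superset hmem fun x hx => ?_
  rw [mem_iInter] at hx
  exact baireMeasurableFun_of_rat _ fun q => hx q
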